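/- Let M be a pointed metric space, let γ ∈ (0,1], let A be a subset of M̃, and let u,v ∈ M with u ≠ v. The set A ∪ {(u,v)} is γ-cyclically monotonic if and only if there exists f in the closed unit ball of Lip_0(M) satisfying f(m_{x,y}) ≥ γ for all (x,y) ∈ A, and f(y) − f(x) + γ·d(u,v) ≤ d(x,u) + d(y,v) for all x,y ∈ π(A). -/

import Mathlib

/-- The set `M̃ = {(x,y) : x ≠ y}` as a subtype. -/
def Mt (M : Type*) : Type _ := {p : M × M // p.1 ≠ p.2}

variable {M : Type*} [MetricSpace M]

/-- The de Leeuw quotient `f(m_{x,y}) = (f x - f y)/d(x,y)`. -/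
noncomputable def mQ (f : M → ℝ) (p : Mt M) : ℝ :=
  (f p.1.1 - f p.1.2) / dist p.1.1 p.1.2

/-- `A ⊆ M̃` is `γ`-cyclically monotonic. -/
def GammaCM (γ : ℝ) (A : Set (Mt M)) : Prop :=
  ∀ (n : ℕ) (p : Fin (n + 1) → Mt M), (∀ i, p i ∈ A) →
    0 ≤ ∑ i : Fin (n + 1),
      min (dist (p i).1.1 (p (i + 1)).1.2 - γ * dist (p i).1.1 (p i).1.2)
          (dist (p i).1.2 (p (i + 1)).1.2)

/-- `π(A)`. -/
def piA (A : Set (Mt M)) : Set M := {z | ∃ p ∈ A, p.1.1 = z ∨ p.1.2 = z}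

/-- The pair `(u,v)` as an element of `M̃`. -/
def pr {M : Type*} (u v : M) (h : u ≠ v) : Mt M := ⟨(u, v), h⟩

/-- The weight of a link in a cycle. -/
noncomputable def wL (γ : ℝ) (q : Mt M) (c : M) : ℝ :=
  min (dist q.1.1 c - γ * dist q.1.1 q.1.2) (dist q.1.2 c)

lemma wL_lip (γ : ℝ) (q : Mt M) (z z' : M) : wL γ q z ≤ wL γ q z' + dist z z' := by
  have h1 : dist q.1.1 z - γ * dist q.1.1 q.1.2 ≤
      (dist q.1.1 z' - γ * dist q.1.1 q.1.2) + dist z z' := by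
    have := dist_triangle q.1.1 z' z
    linarith [dist_comm z z' ▸ this]
  have h2 : dist q.1.2 z ≤ dist q.1.2 z' + dist z z' := by
    have := dist_triangle q.1.2 z' z
    linarith [dist_comm z z' ▸ this]
  calc wL γ q z ≤ min ((dist q.1.1 z' - γ * dist q.1.1 q.1.2) + dist z z')
        (dist q.1.2 z' + dist z z') := min_le_min h1 h2
    _ = wL γ q z' + dist z z' := by
        rw [wL]
        exact (min_add_add_right (dist q.1.1 z' - γ * dist q.1.1 q.1.2) (dist q.1.2 z') (dist z z'))

/-- First `y`-coordinate of a list, with default. -/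
def headY : List (Mt M) → M → M
  | [], z => z
  | q :: _, _ => q.1.2

/-- The cost of a chain ending at `z`. -/
noncomputable def costAux (γ : ℝ) : List (Mt M) → M → ℝ
  | [], _ => 0
  | q :: L, z => wL γ q (headY L z) + costAux γ L z

lemma costAux_lip (γ : ℝ) (L : List (Mt M)) (z z' : M) :
    costAux γ L z ≤ costAux γ L z' + dist z z' := by
  induction L with
  | nil => simp [costAux, dist_nonneg]
  | cons q L ih =>
    cases L with
    | nil => simpa [costAux, headY] using wL_lip γ q z z'
    | cons q' L' =>
      simp only [costAux, headY]
      have := ih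
      simp only [costAux, headY] at this
      linarith

lemma costAux_append (γ : ℝ) (L : List (Mt M)) (q : Mt M) (z : M) :
    costAux γ (L ++ [q]) z = costAux γ L q.1.2 + wL γ q z := by
  induction L with
  | nil => simp [costAux, headY]
  | cons q' L ih =>
    have hh : headY (L ++ [q]) z = headY L q.1.2 := by cases L <;> rfl
    simp only [List.cons_append, costAux]
    rw [hh, ih]
    ring

lemma costAux_eq_sum (γ : ℝ) (L : List (Mt M)) (z : M) (d : Mt M) :
    costAux γ L z = ∑ i ∈ Finset.range L.length, wL γ (L.getD i d)
      (if i + 1 < L.length then (L.getD (i + 1) d).1.2 else z) := by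
  induction L with
  | nil => simp [costAux]
  | cons q L ih =>
    rw [costAux, ih, List.length_cons, Finset.sum_range_succ',
      add_comm (wL γ q (headY L z))]
    congr 1
    · apply Finset.sum_congr rfl
      intro i hi
      simp only [List.getD_cons_succ]
      rw [if_congr (by omega : (i + 1 + 1 < L.length + 1) ↔ (i + 1 < L.length)) rfl rfl]
    · simp only [List.getD_cons_zero]
      cases L with
      | nil => simp [headY]
      | cons q' L'' =>
        rw [if_pos (by simp)]
        simp [headY, List.getD_cons_succ, List.getD_cons_zero]

lemma cost_cycle_nonneg {γ : ℝ} {A' : Set (Mt M)} (hA : GammaCM γ A')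
    (q : Mt M) (L : List (Mt M)) (hmem : ∀ r ∈ q :: L, r ∈ A') :
    0 ≤ costAux γ (q :: L) q.1.2 := by
  set n := L.length with hn
  have h0 := hA n (fun i => (q :: L).getD i.val q)
    (fun i => by
      apply hmem
      have hv : i.val < (q :: L).length := by
        have := i.isLt; simp only [List.length_cons]; omega
      show (q :: L).getD i.val q ∈ q :: L
      rw [List.getD_eq_getElem _ _ hv]
      exact List.getElem_mem hv)
  refine le_trans h0 (le_of_eq ?_)
  rw [costAux_eq_sum γ (q :: L) q.1.2 q]
  rw [show (q :: L).length = n + 1 by simp [hn]]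
  rw [← Fin.sum_univ_eq_sum_range (fun k => wL γ ((q :: L).getD k q)
      (if k + 1 < n + 1 then ((q :: L).getD (k + 1) q).1.2 else q.1.2)) (n + 1)]
  apply Finset.sum_congr rfl
  intro i _
  have hival : ((i + 1 : Fin (n + 1)) : ℕ) = if (i : ℕ) + 1 < n + 1 then (i : ℕ) + 1 else 0 := by
    rw [Fin.val_add_one]
    by_cases hh : i = Fin.last n
    · rw [if_pos hh, if_neg (by simp [hh])]
    · rw [if_neg hh, if_pos (by
        have := i.isLt
        have : (i : ℕ) ≠ n := fun hc => hh (Fin.ext (by simp [hc]))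
        omega)]
  show wL γ ((q :: L).getD i.val q) (((q :: L).getD ((i + 1 : Fin (n + 1)) : ℕ) q).1.2) = _
  rw [hival]
  by_cases h : (i : ℕ) + 1 < n + 1
  · rw [if_pos h, if_pos h]
  · rw [if_neg h, if_neg h, List.getD_cons_zero]

theorem stmt8 (base : M) {γ : ℝ} (hγ0 : 0 < γ) (hγ1 : γ ≤ 1)
    (A : Set (Mt M)) (u v : M) (huv : u ≠ v) :
    GammaCM γ (insert (pr u v huv) A) ↔
      ∃ f : M → ℝ, f base = 0 ∧ LipschitzWith 1 f ∧
        (∀ p ∈ A, γ ≤ mQ f p) ∧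
        ∀ x ∈ piA A, ∀ y ∈ piA A,
          f y - f x + γ * dist u v ≤ dist x u + dist y v := by
  classical
  constructor
  · -- forward direction: Rockafellar-type construction
    intro hA
    set A' : Set (Mt M) := insert (pr u v huv) A with hA'
    set S : M → Set ℝ := fun z =>
      {r | ∃ L : List (Mt M), (∀ q ∈ pr u v huv :: L, q ∈ A') ∧
        r = costAux γ (pr u v huv :: L) z} with hS
    have hne : ∀ z, (S z).Nonempty := by
      intro z
      refine ⟨costAux γ [pr u v huv] z, [], ?_, rfl⟩
      intro q hq
      simp only [List.mem_singleton] at hq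
      rw [hq]
      exact Set.mem_insert _ _
    have hkey0 : ∀ (L : List (Mt M)), (∀ q ∈ pr u v huv :: L, q ∈ A') →
        0 ≤ costAux γ (pr u v huv :: L) v :=
      fun L hL => cost_cycle_nonneg hA (pr u v huv) L hL
    have hlb : ∀ z, ∀ r ∈ S z, -(dist z v) ≤ r := by
      intro z r hr
      obtain ⟨L, hL, rfl⟩ := hr
      have h1 := costAux_lip γ (pr u v huv :: L) v z
      have h2 := hkey0 L hL
      have h3 := dist_comm v z
      linarith
    have hbdd : ∀ z, BddBelow (S z) := fun z => ⟨-(dist z v), fun r hr => hlb z r hr⟩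
    set h : M → ℝ := fun z => sInf (S z) with hh
    have hle : ∀ z r, r ∈ S z → h z ≤ r := fun z r hr => csInf_le (hbdd z) hr
    have hlip : ∀ z z', h z ≤ h z' + dist z z' := by
      intro z z'
      have hlow : ∀ r ∈ S z', h z - dist z z' ≤ r := by
        intro r hr
        obtain ⟨L, hL, rfl⟩ := hr
        have hmem : costAux γ (pr u v huv :: L) z ∈ S z := ⟨L, hL, rfl⟩
        have h1 := hle z _ hmem
        have h2 := costAux_lip γ (pr u v huv :: L) z z'
        linarith
      have := le_csInf (hne z') hlow
      have hzz : h z' = sInf (S z') := rfl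
      linarith
    have hkey : ∀ q ∈ A', h q.1.1 ≤ h q.1.2 - γ * dist q.1.1 q.1.2 := by
      intro q hq
      have hlow : ∀ r ∈ S q.1.2, h q.1.1 + γ * dist q.1.1 q.1.2 ≤ r := by
        intro r hr
        obtain ⟨L, hL, rfl⟩ := hr
        have happ : costAux γ ((pr u v huv :: L) ++ [q]) q.1.1
            = costAux γ (pr u v huv :: L) q.1.2 + wL γ q q.1.1 :=
          costAux_append γ _ q _
        have hw : wL γ q q.1.1 = -(γ * dist q.1.1 q.1.2) := by
          rw [wL, dist_self]
          rw [min_eq_left (by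
            have ha := dist_nonneg (x := q.1.2) (y := q.1.1)
            have hb := mul_nonneg hγ0.le (dist_nonneg (x := q.1.1) (y := q.1.2))
            linarith)]
          ring
        have hmem2 : costAux γ ((pr u v huv :: L) ++ [q]) q.1.1 ∈ S q.1.1 := by
          refine ⟨L ++ [q], ?_, by rw [List.cons_append]⟩
          intro r hr
          rw [← List.cons_append, List.mem_append] at hr
          rcases hr with hr | hr
          · exact hL r hr
          · simp only [List.mem_singleton] at hr
            rw [hr]; exact hq
        have h1 := hle q.1.1 _ hmem2
        rw [happ, hw] at h1
        linarith
      have := le_csInf (hne q.1.2) hlow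
      have hzz : h q.1.2 = sInf (S q.1.2) := rfl
      linarith
    refine ⟨fun z => h base - h z, by simp, ?_, ?_, ?_⟩
    · apply LipschitzWith.of_dist_le_mul
      intro a b
      show dist (h base - h a) (h base - h b) ≤ (1 : NNReal) * dist a b
      simp only [NNReal.coe_one, one_mul, Real.dist_eq]
      rw [abs_sub_le_iff]
      constructor
      · have h1 := hlip b a
        have h2 := dist_comm b a
        linarith
      · have h1 := hlip a b
        linarith
    · intro p hp
      have hq := hkey p (Set.mem_insert_iff.mpr (Or.inr hp))
      have hd : 0 < dist p.1.1 p.1.2 := dist_pos.mpr p.2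
      show γ ≤ ((h base - h p.1.1) - (h base - h p.1.2)) / dist p.1.1 p.1.2
      rw [le_div_iff₀ hd]
      linarith
    · intro x hx y hy
      have huvkey : h u ≤ h v - γ * dist u v := hkey (pr u v huv) (Set.mem_insert _ _)
      have h1 := hlip x u
      have h2 := hlip v y
      have h3 := dist_comm v y
      show (h base - h y) - (h base - h x) + γ * dist u v ≤ dist x u + dist y v
      linarith
  · -- backward direction
    rintro ⟨f, hfb, hflip, hfA, hπ⟩
    have flf : ∀ a b : M, f a - f b ≤ dist a b := by
      intro a b
      have h1 := hflip.dist_le_mul a b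
      rw [NNReal.coe_one, one_mul, Real.dist_eq] at h1
      exact le_trans (le_abs_self _) h1
    have hfq : ∀ q ∈ A, γ * dist q.1.1 q.1.2 ≤ f q.1.1 - f q.1.2 := by
      intro q hq
      have h1 := hfA q hq
      rw [mQ, le_div_iff₀ (dist_pos.mpr q.2)] at h1
      linarith
    have hx1 : ∀ q ∈ A, q.1.1 ∈ piA A := fun q hq => ⟨q, hq, Or.inl rfl⟩
    have hx2 : ∀ q ∈ A, q.1.2 ∈ piA A := fun q hq => ⟨q, hq, Or.inr rfl⟩
    have key4 : ∀ q ∈ A, ∀ c ∈ piA A,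
        f q.1.2 - wL γ q v ≤ f c + wL γ (pr u v huv) c := by
      intro q hq c hc
      have h1 := hπ c hc q.1.2 (hx2 q hq)
      have h2 := hπ c hc q.1.1 (hx1 q hq)
      have h3 : f q.1.2 - f c ≤ dist q.1.2 v + dist v c := by
        have ha := flf q.1.2 c
        have hb := dist_triangle q.1.2 v c
        linarith
      have h4 : f q.1.1 - f c ≤ dist q.1.1 v + dist v c := by
        have ha := flf q.1.1 c
        have hb := dist_triangle q.1.1 v c
        linarith
      have h5 := hfq q hq
      have hcu : dist c u = dist u c := dist_comm c u
      have e1 : wL γ (pr u v huv) c = min (dist u c - γ * dist u v) (dist v c) := rfl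
      rw [e1, wL]
      rcases min_cases (dist q.1.1 v - γ * dist q.1.1 q.1.2) (dist q.1.2 v) with
        ⟨hm, _⟩ | ⟨hm, _⟩ <;>
      rcases min_cases (dist u c - γ * dist u v) (dist v c) with ⟨hm2, _⟩ | ⟨hm2, _⟩ <;>
      rw [hm, hm2] <;> linarith
    set tset : Set ℝ := {r | ∃ q ∈ A, r = f q.1.2 - wL γ q v} with htset
    set t : ℝ := sSup tset with ht
    have hbddt : ∀ q₀ ∈ A, BddAbove tset := by
      intro q₀ hq₀
      refine ⟨f q₀.1.2 + wL γ (pr u v huv) q₀.1.2, ?_⟩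
      rintro r ⟨q, hq, rfl⟩
      exact key4 q hq q₀.1.2 (hx2 q₀ hq₀)
    have hw0 : wL γ (pr u v huv) v = 0 := by
      show min (dist u v - γ * dist u v) (dist v v) = 0
      rw [dist_self]
      exact min_eq_right (by nlinarith [dist_nonneg (x := u) (y := v)])
    have hwqv : ∀ q : Mt M, q.1.2 = v → wL γ q v = 0 := by
      intro q hqv
      rw [wL, hqv, dist_self]
      exact min_eq_right (by nlinarith [dist_nonneg (x := q.1.1) (y := v)])
    set g : M → ℝ := fun z => if z = v then t else f z with hg
    have main : ∀ q ∈ insert (pr u v huv) A, ∀ q' ∈ insert (pr u v huv) A,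
        g q.1.2 - g q'.1.2 ≤ wL γ q q'.1.2 := by
      intro q hq q' hq'
      rcases Set.mem_insert_iff.mp hq with hqe | hqA
      · -- q = pr u v huv
        subst hqe
        have hgq : g (pr u v huv).1.2 = t := if_pos rfl
        by_cases hcv : q'.1.2 = v
        · rw [hgq, show g q'.1.2 = t from if_pos hcv, hcv, hw0]
          linarith
        · have hq'A : q' ∈ A := by
            rcases Set.mem_insert_iff.mp hq' with rfl | hh
            · exact absurd rfl hcv
            · exact hh
          have hcpi : q'.1.2 ∈ piA A := hx2 q' hq'A
          have htle : t ≤ f q'.1.2 + wL γ (pr u v huv) q'.1.2 := by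
            apply csSup_le (⟨f q'.1.2 - wL γ q' v, q', hq'A, rfl⟩ : tset.Nonempty)
            rintro r ⟨q'', hq'', rfl⟩
            exact key4 q'' hq'' q'.1.2 hcpi
          rw [hgq, show g q'.1.2 = f q'.1.2 from if_neg hcv]
          linarith
      · -- q ∈ A
        have hgy : g q.1.2 ≤ f q.1.2 := by
          by_cases hyv : q.1.2 = v
          · rw [show g q.1.2 = t from if_pos hyv]
            have : t ≤ f v := by
              apply csSup_le (⟨f q.1.2 - wL γ q v, q, hqA, rfl⟩ : tset.Nonempty)
              rintro r ⟨q'', hq'', rfl⟩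
              have h1 := key4 q'' hq'' v (hyv ▸ hx2 q hqA)
              rwa [hw0, add_zero] at h1
            rw [hyv]
            exact this
          · rw [show g q.1.2 = f q.1.2 from if_neg hyv]
        by_cases hcv : q'.1.2 = v
        · have htge : f q.1.2 - wL γ q v ≤ t :=
            le_csSup (hbddt q hqA) ⟨q, hqA, rfl⟩
          rw [show g q'.1.2 = t from if_pos hcv, hcv]
          linarith
        · have hq'A : q' ∈ A := by
            rcases Set.mem_insert_iff.mp hq' with rfl | hh
            · exact absurd rfl hcv
            · exact hh
          have hb1 : f q.1.2 - f q'.1.2 ≤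
              dist q.1.1 q'.1.2 - γ * dist q.1.1 q.1.2 := by
            have ha := flf q.1.1 q'.1.2
            have hb := hfq q hqA
            linarith
          have hb2 : f q.1.2 - f q'.1.2 ≤ dist q.1.2 q'.1.2 := flf _ _
          have : f q.1.2 - f q'.1.2 ≤ wL γ q q'.1.2 := le_min hb1 hb2
          rw [show g q'.1.2 = f q'.1.2 from if_neg hcv]
          linarith
    intro n p hp
    have tele : ∑ i : Fin (n + 1), (g ((p i).1.2) - g ((p (i + 1)).1.2)) = 0 := by
      rw [Finset.sum_sub_distrib, sub_eq_zero]
      exact (Fintype.sum_bijective (· + (1 : Fin (n + 1)))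
        (Equiv.addRight (1 : Fin (n + 1))).bijective _ _ (fun i => rfl)).symm
    refine le_trans (le_of_eq tele.symm) (Finset.sum_le_sum ?_)
    intro i _
    exact main (p i) (hp i) (p (i + 1)) (hp (i + 1))
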